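/- Let g ∈ (A ∪ B) ∖ C be an element of G = A ∗_C B such that no conjugate of g in G lies in C. If g' ∈ G is a cyclically reduced element conjugate to g in G, then g' lies in the same factor as g (g' ∈ A ∖ C if g ∈ A, resp. g' ∈ B ∖ C if g ∈ B), and g and g' are conjugate by an element of that factor. -/

import Mathlib

open Monoid

universe u

/-- The two factors of the amalgam, indexed by `Bool`. -/
def Fac (A B : Type u) : Bool → Type u
  | true => A
  | false => B

instance FacGroup (A B : Type u) [Group A] [Group B] : (b : Bool) → Group (Fac A B b)
  | true => inferInstanceAs (Group A)
  | false => inferInstanceAs (Group B)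

variable {A B C : Type u} [Group A] [Group B] [Group C]

/-- The family of monomorphisms `C → A`, `C → B`. -/
def amalgHom (φ : C →* A) (ψ : C →* B) : (b : Bool) → C →* Fac A B b
  | true => φ
  | false => ψ

variable (φ : C →* A) (ψ : C →* B)

/-- The amalgamated free product `G = A ∗_C B`, i.e. the pushout of `φ` and `ψ`. -/
abbrev Amalg : Type u := Monoid.PushoutI (amalgHom φ ψ)

/-- The factor `A`, identified with its image in `G = A ∗_C B`. -/
def facA : Subgroup (Amalg φ ψ) := (Monoid.PushoutI.of (φ := amalgHom φ ψ) true).range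

/-- The factor `B`, identified with its image in `G = A ∗_C B`. -/
def facB : Subgroup (Amalg φ ψ) := (Monoid.PushoutI.of (φ := amalgHom φ ψ) false).range

/-- The amalgamated subgroup `C`, identified with its image in `G = A ∗_C B`. -/
def amalgC : Subgroup (Amalg φ ψ) := (Monoid.PushoutI.base (amalgHom φ ψ)).range

/-- `c * g₁ ⋯ gₙ` (with the list `L = [g₁, …, gₙ]`) is a reduced form:
`c ∈ C`, each `gᵢ ∈ (A ∪ B) ∖ C`, and consecutive letters lie in different factors. -/
def ReducedForm (c : Amalg φ ψ) (L : List (Amalg φ ψ)) : Prop :=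
  c ∈ amalgC φ ψ ∧
  (∀ x ∈ L, (x ∈ facA φ ψ ∨ x ∈ facB φ ψ) ∧ x ∉ amalgC φ ψ) ∧
  L.Chain' (fun x y => (x ∈ facA φ ψ → y ∈ facB φ ψ) ∧ (x ∈ facB φ ψ → y ∈ facA φ ψ))

/-- A reduced form `c * g₁ ⋯ gₙ` is cyclically reduced if `n = 0`, or `n = 1` and the
element is not conjugate to an element of `C`, or `n ≥ 2` and `g₁`, `gₙ` lie in different
factors. -/
def CyclicallyReducedForm (c : Amalg φ ψ) (L : List (Amalg φ ψ)) : Prop :=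
  ReducedForm φ ψ c L ∧
  (L.length = 0 ∨
    (L.length = 1 ∧ ∀ x : Amalg φ ψ, x⁻¹ * (c * L.prod) * x ∉ amalgC φ ψ) ∨
    (2 ≤ L.length ∧ ∀ x y : Amalg φ ψ, x ∈ L.head? → y ∈ L.getLast? →
      ((x ∈ facA φ ψ → y ∈ facB φ ψ) ∧ (x ∈ facB φ ψ → y ∈ facA φ ψ))))

/-- An element of `G = A ∗_C B` is cyclically reduced if it has a cyclically reduced
reduced form. -/
def CyclicallyReduced (g : Amalg φ ψ) : Prop :=
  ∃ (c : Amalg φ ψ) (L : List (Amalg φ ψ)), g = c * L.prod ∧ CyclicallyReducedForm φ ψ c L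
namespace ConjAux

open Monoid Monoid.PushoutI List

variable {A B C : Type u} [Group A] [Group B] [Group C] {φ : C →* A} {ψ : C →* B}

def fac (φ : C →* A) (ψ : C →* B) (b : Bool) : Subgroup (Amalg φ ψ) :=
  (Monoid.PushoutI.of (φ := amalgHom φ ψ) b).range

theorem facA_eq : facA φ ψ = fac φ ψ true := rfl
theorem facB_eq : facB φ ψ = fac φ ψ false := rfl

def R (φ : C →* A) (ψ : C →* B) (x y : Amalg φ ψ) : Prop :=
  (x ∈ facA φ ψ → y ∈ facB φ ψ) ∧ (x ∈ facB φ ψ → y ∈ facA φ ψ)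

def Letter (φ : C →* A) (ψ : C →* B) (x : Amalg φ ψ) : Prop :=
  (x ∈ facA φ ψ ∨ x ∈ facB φ ψ) ∧ x ∉ amalgC φ ψ

def Red (φ : C →* A) (ψ : C →* B) (L : List (Amalg φ ψ)) : Prop :=
  (∀ x ∈ L, Letter φ ψ x) ∧ L.Chain' (R φ ψ)

theorem reducedForm_iff {c : Amalg φ ψ} {L : List (Amalg φ ψ)} :
    ReducedForm φ ψ c L ↔ c ∈ amalgC φ ψ ∧ Red φ ψ L :=
  ⟨fun ⟨h1, h2, h3⟩ => ⟨h1, h2, h3⟩, fun ⟨h1, h2, h3⟩ => ⟨h1, h2, h3⟩⟩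

theorem red_nil : Red φ ψ ([] : List (Amalg φ ψ)) := ⟨by simp, List.IsChain.nil⟩

theorem amalgC_le_fac (b : Bool) : amalgC φ ψ ≤ fac φ ψ b := by
  rintro x ⟨c, rfl⟩
  exact ⟨amalgHom φ ψ b c, Monoid.PushoutI.of_apply_eq_base (amalgHom φ ψ) b c⟩

variable (hinj : ∀ i, Function.Injective (amalgHom φ ψ i))

include hinj

theorem mem_amalgC_of_mem_both {b : Bool} {x : Amalg φ ψ}
    (h1 : x ∈ fac φ ψ b) (h2 : x ∈ fac φ ψ !b) : x ∈ amalgC φ ψ := by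
  have hne : b ≠ !b := by cases b <;> simp
  have := Monoid.PushoutI.inf_of_range_eq_base_range hinj hne
  show x ∈ (Monoid.PushoutI.base (amalgHom φ ψ)).range
  rw [← this]
  exact ⟨h1, h2⟩

theorem fac_determined {x : Amalg φ ψ} {b t : Bool} (hxC : x ∉ amalgC φ ψ)
    (hb : x ∈ fac φ ψ b) (ht : x ∈ fac φ ψ t) : t = b := by
  by_contra h
  have htb : t = !b := by cases b <;> cases t <;> simp_all
  exact hxC (mem_amalgC_of_mem_both hinj hb (htb ▸ ht))

omit hinj

theorem letter_fac {x : Amalg φ ψ} (hx : Letter φ ψ x) : ∃ b, x ∈ fac φ ψ b :=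
  hx.1.elim (fun h => ⟨true, h⟩) (fun h => ⟨false, h⟩)

theorem letter_of_fac {x : Amalg φ ψ} {b : Bool} (h : x ∈ fac φ ψ b)
    (hC : x ∉ amalgC φ ψ) : Letter φ ψ x := by
  cases b
  · exact ⟨Or.inr h, hC⟩
  · exact ⟨Or.inl h, hC⟩

theorem letter_fac_not {x : Amalg φ ψ} {b : Bool} (hx : Letter φ ψ x)
    (h : x ∉ fac φ ψ b) : x ∈ fac φ ψ !b := by
  rcases hx.1 with h1 | h1 <;> cases b <;> first | exact h1 | exact absurd h1 h

theorem letter_inv {x : Amalg φ ψ} (hx : Letter φ ψ x) : Letter φ ψ x⁻¹ := by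
  refine ⟨hx.1.imp (fun h => inv_mem h) (fun h => inv_mem h), fun h => hx.2 ?_⟩
  simpa using inv_mem h

theorem fac_inv {x : Amalg φ ψ} {b : Bool} (h : x ∈ fac φ ψ b) : x⁻¹ ∈ fac φ ψ b :=
  inv_mem h

theorem R_next {x y : Amalg φ ψ} {b : Bool} (h : R φ ψ x y) (hx : x ∈ fac φ ψ b) :
    y ∈ fac φ ψ !b := by
  cases b
  · exact h.2 hx
  · exact h.1 hx

include hinj

theorem R_of_fac {x y : Amalg φ ψ} {b : Bool} (hxC : x ∉ amalgC φ ψ)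
    (hx : x ∈ fac φ ψ b) (hy : y ∈ fac φ ψ !b) : R φ ψ x y := by
  constructor
  · intro hxA
    have hb : true = b := fac_determined hinj hxC hx hxA
    subst hb
    exact hy
  · intro hxB
    have hb : false = b := fac_determined hinj hxC hx hxB
    subst hb
    exact hy

end ConjAux
namespace ConjAux

open Monoid Monoid.PushoutI List

variable {A B C : Type u} [Group A] [Group B] [Group C] {φ : C →* A} {ψ : C →* B}

theorem red_cons {x : Amalg φ ψ} {T : List (Amalg φ ψ)} (h : Red φ ψ (x :: T)) :
    Letter φ ψ x ∧ Red φ ψ T ∧ ∀ y ∈ T.head?, R φ ψ x y := by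
  have hc := List.isChain_cons.mp h.2
  exact ⟨h.1 x (List.mem_cons_self), ⟨fun z hz => h.1 z (List.mem_cons_of_mem _ hz), hc.2⟩,
    hc.1⟩

variable (hinj : ∀ i, Function.Injective (amalgHom φ ψ i))

include hinj

theorem red_word_exists (L : List (Amalg φ ψ)) (hL : Red φ ψ L) :
    ∃ w : Monoid.CoprodI.Word (Fac A B),
      Monoid.PushoutI.Reduced (amalgHom φ ψ) w ∧
      Monoid.PushoutI.ofCoprodI w.prod = L.prod ∧
      w.toList.map (fun p => Monoid.PushoutI.of (φ := amalgHom φ ψ) p.1 p.2) = L := by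
  induction L with
  | nil =>
    refine ⟨.empty, ?_, by simp [Monoid.CoprodI.Word.prod_empty], rfl⟩
    intro g hg
    simp [Monoid.CoprodI.Word.empty] at hg
  | cons x T ih =>
    obtain ⟨hx, hT, hchain⟩ := red_cons hL
    obtain ⟨w, hred, hprod, hmap⟩ := ih hT
    obtain ⟨b, hxb⟩ := letter_fac hx
    obtain ⟨a, ha⟩ := hxb
    have h1 : a ≠ 1 := by
      intro h
      apply hx.2
      rw [← ha, h, map_one]
      exact one_mem _
    have hmw : w.fstIdx ≠ some b := by
      intro hidx
      cases hw : w.toList with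
      | nil => rw [Monoid.CoprodI.Word.fstIdx, hw] at hidx; simp at hidx
      | cons p rest =>
        rw [Monoid.CoprodI.Word.fstIdx, hw] at hidx
        simp at hidx
        have hT2 : T = Monoid.PushoutI.of (φ := amalgHom φ ψ) p.1 p.2 ::
            rest.map (fun p => Monoid.PushoutI.of (φ := amalgHom φ ψ) p.1 p.2) := by
          rw [← hmap, hw]; rfl
        set y := Monoid.PushoutI.of (φ := amalgHom φ ψ) p.1 p.2 with hy
        have hyb : y ∈ fac φ ψ b := by rw [← hidx]; exact ⟨p.2, rfl⟩
        have hRxy : R φ ψ x y := by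
          apply hchain
          rw [hT2]; rfl
        have hxb' : x ∈ fac φ ψ b := ⟨a, ha⟩
        have hyC : y ∈ amalgC φ ψ := mem_amalgC_of_mem_both hinj hyb (R_next hRxy hxb')
        exact (hT.1 y (by rw [hT2]; exact List.mem_cons_self)).2 hyC
    refine ⟨Monoid.CoprodI.Word.cons a w hmw h1, ?_, ?_, ?_⟩
    · intro p hp
      simp only [Monoid.CoprodI.Word.cons, List.mem_cons] at hp
      rcases hp with rfl | hp
      · rintro ⟨c, hc⟩
        apply hx.2
        dsimp only at hc
        rw [← ha, ← hc, Monoid.PushoutI.of_apply_eq_base]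
        exact ⟨c, rfl⟩
      · exact hred p hp
    · rw [Monoid.CoprodI.Word.prod_cons, map_mul, Monoid.PushoutI.ofCoprodI_of, ha, hprod,
        List.prod_cons]
    · simp only [Monoid.CoprodI.Word.cons, List.map_cons, hmap, ha]

theorem prod_not_mem_amalgC {L : List (Amalg φ ψ)} (hL : Red φ ψ L) (hne : L ≠ []) :
    L.prod ∉ amalgC φ ψ := by
  intro hmem
  obtain ⟨w, hred, hprod, hmap⟩ := red_word_exists hinj L hL
  have hw := hred.eq_empty_of_mem_range hinj (by rw [hprod]; exact hmem)
  rw [hw] at hmap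
  simp only [Monoid.CoprodI.Word.empty, List.map_nil] at hmap
  exact hne hmap.symm

theorem form_not_mem_amalgC {c : Amalg φ ψ} {L : List (Amalg φ ψ)} (hc : c ∈ amalgC φ ψ)
    (hL : Red φ ψ L) (hne : L ≠ []) : c * L.prod ∉ amalgC φ ψ := by
  intro h
  apply prod_not_mem_amalgC hinj hL hne
  have := mul_mem (inv_mem hc) h
  rwa [inv_mul_cancel_left] at this

end ConjAux
namespace ConjAux

open Monoid Monoid.PushoutI List

variable {A B C : Type u} [Group A] [Group B] [Group C] {φ : C →* A} {ψ : C →* B}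

variable (hinj : ∀ i, Function.Injective (amalgHom φ ψ i))

include hinj

theorem chain_revinv : ∀ (M : List (Amalg φ ψ)), (∀ x ∈ M, Letter φ ψ x) →
    M.Chain' (R φ ψ) → M.Chain' (fun a b => R φ ψ b⁻¹ a⁻¹) := by
  intro M
  induction M with
  | nil => intro _ _; exact List.IsChain.nil
  | cons x T ih =>
    intro hlet hch
    have hc := List.isChain_cons.mp hch
    refine List.isChain_cons.mpr ⟨?_, ih (fun z hz => hlet z (List.mem_cons_of_mem _ hz)) hc.2⟩
    intro y hy
    have hRxy : R φ ψ x y := hc.1 y hy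
    have hxl : Letter φ ψ x := hlet x (List.mem_cons_self)
    have hyl : Letter φ ψ y := hlet y (List.mem_cons_of_mem _ (List.mem_of_mem_head? hy))
    obtain ⟨b, hxb⟩ := letter_fac hxl
    have hyb : y ∈ fac φ ψ !b := R_next hRxy hxb
    have : x⁻¹ ∈ fac φ ψ !(!b) := by rw [Bool.not_not]; exact inv_mem hxb
    exact R_of_fac hinj (letter_inv hyl).2 (inv_mem hyb) this

theorem red_revinv {M : List (Amalg φ ψ)} (hM : Red φ ψ M) :
    Red φ ψ (M.map (·⁻¹)).reverse := by
  constructor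
  · intro x hx
    rw [List.mem_reverse, List.mem_map] at hx
    obtain ⟨y, hy, rfl⟩ := hx
    exact letter_inv (hM.1 y hy)
  · show List.IsChain _ _; rw [List.isChain_reverse, List.isChain_map]
    exact chain_revinv hinj M hM.1 hM.2

omit hinj

theorem prod_revinv (M : List (Amalg φ ψ)) : (M.map (·⁻¹)).reverse.prod = M.prod⁻¹ :=
  (List.prod_inv_reverse M).symm

end ConjAux
namespace ConjAux

open Monoid Monoid.PushoutI List

variable {A B C : Type u} [Group A] [Group B] [Group C] {φ : C →* A} {ψ : C →* B}

variable (hinj : ∀ i, Function.Injective (amalgHom φ ψ i))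

include hinj

theorem shape_unique :
    ∀ (L₁ : List (Amalg φ ψ)) {L₂ : List (Amalg φ ψ)} {c₁ c₂ : Amalg φ ψ},
      c₁ ∈ amalgC φ ψ → c₂ ∈ amalgC φ ψ → Red φ ψ L₁ → Red φ ψ L₂ →
      c₁ * L₁.prod = c₂ * L₂.prod →
      L₁.length = L₂.length ∧
      (∀ (b : Bool) (x₁ x₂ : Amalg φ ψ), x₁ ∈ L₁.head? → x₂ ∈ L₂.head? →
        (x₁ ∈ fac φ ψ b ↔ x₂ ∈ fac φ ψ b)) ∧
      (∀ (b : Bool) (x₁ x₂ : Amalg φ ψ), x₁ ∈ L₁.getLast? → x₂ ∈ L₂.getLast? →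
        (x₁ ∈ fac φ ψ b ↔ x₂ ∈ fac φ ψ b)) := by
  intro L₁
  induction L₁ with
  | nil =>
    intro L₂ c₁ c₂ hc₁ hc₂ h1 h2 heq
    have hL₂ : L₂ = [] := by
      by_contra hne
      apply form_not_mem_amalgC hinj hc₂ h2 hne
      rw [← heq]; simpa using hc₁
    subst hL₂
    refine ⟨rfl, ?_, ?_⟩ <;> intro b x₁ x₂ hx₁ hx₂ <;> simp at hx₁
  | cons x T₁ ih =>
    intro L₂ c₁ c₂ hc₁ hc₂ h1 h2 heq
    obtain ⟨hxl, hT₁, hch₁⟩ := red_cons h1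
    cases L₂ with
    | nil =>
      exfalso
      apply form_not_mem_amalgC hinj hc₁ h1 (List.cons_ne_nil _ _)
      rw [heq]; simpa using hc₂
    | cons y T₂ =>
      obtain ⟨hyl, hT₂, hch₂⟩ := red_cons h2
      obtain ⟨b, hxb⟩ := letter_fac hxl
      have key : c₁ * (x * T₁.prod) = c₂ * (y * T₂.prod) := by
        simpa [List.prod_cons, mul_assoc] using heq
      have hyb : y ∈ fac φ ψ b := by
        by_contra hyb
        have hy' : y ∈ fac φ ψ !b := letter_fac_not hyl hyb
        set u : Amalg φ ψ := x⁻¹ * (c₁⁻¹ * c₂) with hu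
        have huf : u ∈ fac φ ψ b :=
          mul_mem (inv_mem hxb) (mul_mem (amalgC_le_fac b (inv_mem hc₁)) (amalgC_le_fac b hc₂))
        have huC : u ∉ amalgC φ ψ := by
          intro h
          apply hxl.2
          have hx2 : x = (c₁⁻¹ * c₂) * u⁻¹ := by rw [hu]; group
          rw [hx2]
          exact mul_mem (mul_mem (inv_mem hc₁) hc₂) (inv_mem h)
        set V : List (Amalg φ ψ) := (T₁.map (·⁻¹)).reverse ++ u :: y :: T₂ with hV
        have hrev := red_revinv hinj hT₁
        have hVred : Red φ ψ V := by
          constructor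
          · intro z hz
            rw [hV, List.mem_append] at hz
            rcases hz with hz | hz
            · exact hrev.1 z hz
            · rcases List.mem_cons.mp hz with rfl | hz
              · exact letter_of_fac huf huC
              · exact h2.1 z hz
          · rw [hV]
            refine List.isChain_append.mpr ⟨hrev.2, ?_, ?_⟩
            · refine List.isChain_cons.mpr ⟨?_, h2.2⟩
              intro q hq
              simp only [List.head?_cons, Option.mem_def, Option.some.injEq] at hq
              subst hq
              exact R_of_fac hinj huC huf hy'
            · intro p hp q hq
              simp only [List.head?_cons, Option.mem_def, Option.some.injEq] at hq
              subst hq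
              rw [List.getLast?_reverse] at hp
              cases T₁ with
              | nil => simp at hp
              | cons z T₁' =>
                simp only [List.map_cons, List.head?_cons, Option.mem_def,
                  Option.some.injEq] at hp
                subst hp
                have hz : z ∈ fac φ ψ !b := R_next (hch₁ z (by simp)) hxb
                have hzl : Letter φ ψ z := hT₁.1 z (List.mem_cons_self)
                have hub : u ∈ fac φ ψ !(!b) := by rw [Bool.not_not]; exact huf
                exact R_of_fac hinj (letter_inv hzl).2 (inv_mem hz) hub
        have hVne : V ≠ [] := by simp [hV]
        have hVprod : V.prod = 1 := by
          have hkey2 : T₁.prod⁻¹ * (x⁻¹ * (c₁⁻¹ * (c₂ * (y * T₂.prod)))) = 1 := by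
            rw [← key]; group
          rw [hV, List.prod_append, prod_revinv, List.prod_cons, List.prod_cons, hu]
          rw [← hkey2]
          simp [mul_assoc]
        exact prod_not_mem_amalgC hinj hVred hVne (hVprod ▸ one_mem _)
      set d : Amalg φ ψ := x⁻¹ * (c₁⁻¹ * (c₂ * y)) with hd
      have hdf : d ∈ fac φ ψ b :=
        mul_mem (inv_mem hxb)
          (mul_mem (amalgC_le_fac b (inv_mem hc₁)) (mul_mem (amalgC_le_fac b hc₂) hyb))
      have hT₁eq : T₁.prod = x⁻¹ * (c₁⁻¹ * (c₂ * (y * T₂.prod))) := by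
        have h3 := congrArg (fun z => x⁻¹ * (c₁⁻¹ * z)) key
        simpa [mul_assoc] using h3
      have hdT : d * T₂.prod = x⁻¹ * (c₁⁻¹ * (c₂ * (y * T₂.prod))) := by
        rw [hd]; simp [mul_assoc]
      by_cases hdC : d ∈ amalgC φ ψ
      · obtain ⟨hlen, hhead, hlast⟩ :=
          ih (L₂ := T₂) (c₁ := 1) (c₂ := d) (one_mem _) hdC hT₁ hT₂
            (by rw [one_mul, hT₁eq, hdT])
        have hiff : ∀ t : Bool, (x ∈ fac φ ψ t ↔ y ∈ fac φ ψ t) := by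
          intro t
          constructor
          · intro hx'
            have ht : t = b := fac_determined hinj hxl.2 hxb hx'
            exact ht ▸ hyb
          · intro hy'
            have ht : t = b := fac_determined hinj hyl.2 hyb hy'
            exact ht ▸ hxb
        refine ⟨by simp [hlen], ?_, ?_⟩
        · intro t x₁ x₂ hx₁ hx₂
          simp only [List.head?_cons, Option.mem_def, Option.some.injEq] at hx₁ hx₂
          subst hx₁; subst hx₂
          exact hiff t
        · intro t x₁ x₂ hx₁ hx₂
          cases T₁ with
          | nil =>
            have hT₂nil : T₂ = [] := by
              cases T₂ with
              | nil => rfl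
              | cons w T₂' => simp at hlen
            subst hT₂nil
            simp only [List.getLast?_singleton, Option.mem_def, Option.some.injEq] at hx₁ hx₂
            subst hx₁; subst hx₂
            exact hiff t
          | cons z T₁' =>
            cases T₂ with
            | nil => simp at hlen
            | cons w T₂' =>
              rw [List.getLast?_cons_cons] at hx₁ hx₂
              exact hlast t x₁ x₂ hx₁ hx₂
      · exfalso
        have hdl : Letter φ ψ d := letter_of_fac hdf hdC
        have hred' : Red φ ψ (d :: T₂) := by
          constructor
          · intro z hz
            rcases List.mem_cons.mp hz with rfl | hz
            · exact hdl
            · exact hT₂.1 z hz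
          · refine List.isChain_cons.mpr ⟨?_, hT₂.2⟩
            intro q hq
            have hq2 : q ∈ fac φ ψ !b := R_next (hch₂ q hq) hyb
            exact R_of_fac hinj hdC hdf hq2
        cases T₁ with
        | nil =>
          apply prod_not_mem_amalgC hinj hred' (List.cons_ne_nil _ _)
          have hone : (d :: T₂).prod = 1 := by
            rw [List.prod_cons, hdT, ← hT₁eq]
            simp
          rw [hone]
          exact one_mem _
        | cons z T₁' =>
          obtain ⟨_, hhead, _⟩ :=
            ih (L₂ := d :: T₂) (c₁ := 1) (c₂ := 1) (one_mem _) (one_mem _) hT₁ hred'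
              (by rw [one_mul, one_mul, hT₁eq, List.prod_cons, hdT])
          have hz : z ∈ fac φ ψ !b := R_next (hch₁ z (by simp)) hxb
          have hd2 : d ∈ fac φ ψ !b := (hhead (!b) z d (by simp) (by simp)).mp hz
          exact hdC (mem_amalgC_of_mem_both hinj hdf hd2)

end ConjAux
namespace ConjAux

open Monoid Monoid.PushoutI List

variable {A B C : Type u} [Group A] [Group B] [Group C] {φ : C →* A} {ψ : C →* B}

variable (hinj : ∀ i, Function.Injective (amalgHom φ ψ i))

theorem conj_decomp :
    ∀ (L : List (Amalg φ ψ)), Red φ ψ L → ∀ (b : Bool) (g : Amalg φ ψ), g ∈ fac φ ψ b →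
      (∀ x : Amalg φ ψ, x⁻¹ * g * x ∉ amalgC φ ψ) →
      ∃ a ∈ fac φ ψ b, ∃ M : List (Amalg φ ψ), Red φ ψ M ∧
        (∀ y ∈ M.head?, y ∈ fac φ ψ !b ∧ y ∉ fac φ ψ b) ∧
        L.prod⁻¹ * g * L.prod = M.prod⁻¹ * (a⁻¹ * g * a) * M.prod := by
  intro L
  induction L with
  | nil =>
    intro _ b g hg hno
    exact ⟨1, one_mem _, [], red_nil, by simp, by simp⟩
  | cons x T ih =>
    intro hL b g hg hno
    obtain ⟨hxl, hT, hch⟩ := red_cons hL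
    by_cases hxb : x ∈ fac φ ψ b
    · obtain ⟨a₁, ha₁, M, hM, hhead, heq⟩ :=
        ih hT b (x⁻¹ * g * x) (mul_mem (mul_mem (inv_mem hxb) hg) hxb)
          (fun z => by
            have := hno (x * z)
            simpa [mul_assoc, mul_inv_rev] using this)
      refine ⟨x * a₁, mul_mem hxb ha₁, M, hM, hhead, ?_⟩
      rw [List.prod_cons, mul_inv_rev]
      calc T.prod⁻¹ * x⁻¹ * g * (x * T.prod)
          = T.prod⁻¹ * (x⁻¹ * g * x) * T.prod := by group
        _ = M.prod⁻¹ * (a₁⁻¹ * (x⁻¹ * g * x) * a₁) * M.prod := heq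
        _ = M.prod⁻¹ * ((x * a₁)⁻¹ * g * (x * a₁)) * M.prod := by group
    · have hx' : x ∈ fac φ ψ !b := letter_fac_not hxl hxb
      refine ⟨1, one_mem _, x :: T, hL, ?_, by simp⟩
      intro y hy
      simp only [List.head?_cons, Option.mem_def, Option.some.injEq] at hy
      subst hy
      exact ⟨hx', hxb⟩

theorem single_form {y : Amalg φ ψ} {b : Bool} (hy : y ∈ fac φ ψ b) :
    ∃ c L, c ∈ amalgC φ ψ ∧ Red φ ψ L ∧ y = c * L.prod := by
  by_cases hC : y ∈ amalgC φ ψ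
  · exact ⟨y, [], hC, red_nil, by simp⟩
  · exact ⟨1, [y], one_mem _, ⟨by simpa using letter_of_fac hy hC, List.IsChain.singleton _⟩, by simp⟩

include hinj

theorem mul_right_closed :
    ∀ (L : List (Amalg φ ψ)), Red φ ψ L → ∀ c ∈ amalgC φ ψ, ∀ (i : Bool) (u : Amalg φ ψ),
      u ∈ fac φ ψ i →
      ∃ c' L', c' ∈ amalgC φ ψ ∧ Red φ ψ L' ∧ c * L.prod * u = c' * L'.prod := by
  intro L
  induction L using List.reverseRecOn with
  | nil =>
    intro _ c hc i u hu
    obtain ⟨c', L', hc', hL', heq⟩ := single_form (mul_mem (amalgC_le_fac i hc) hu)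
    exact ⟨c', L', hc', hL', by simpa using heq⟩
  | append_singleton L' t ih =>
    intro hLt c hc i u hu
    have hL' : Red φ ψ L' := by
      refine ⟨fun z hz => hLt.1 z (List.mem_append_left _ hz), ?_⟩
      exact (List.isChain_append.mp hLt.2).1
    have htl : Letter φ ψ t := hLt.1 t (List.mem_append_right _ (List.mem_cons_self))
    have hjun : ∀ p ∈ L'.getLast?, R φ ψ p t := by
      intro p hp
      exact (List.isChain_append.mp hLt.2).2.2 p hp t rfl
    obtain ⟨e, hte⟩ := letter_fac htl
    by_cases hue : u ∈ fac φ ψ e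
    · set v : Amalg φ ψ := t * u with hv
      have hvf : v ∈ fac φ ψ e := mul_mem hte hue
      by_cases hvC : v ∈ amalgC φ ψ
      · obtain ⟨c', L'', hc', hL'', heq⟩ := ih hL' c hc e v hvf
        refine ⟨c', L'', hc', hL'', ?_⟩
        rw [← heq, hv]
        simp [mul_assoc]
      · refine ⟨c, L' ++ [v], hc, ?_, ?_⟩
        · constructor
          · intro z hz
            rcases List.mem_append.mp hz with hz | hz
            · exact hL'.1 z hz
            · rw [List.mem_singleton] at hz
              subst hz
              exact letter_of_fac hvf hvC
          · refine List.isChain_append.mpr ⟨hL'.2, by simp, ?_⟩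
            intro p hp q hq
            simp only [List.head?_cons, Option.mem_def, Option.some.injEq] at hq
            subst hq
            have hRpt : R φ ψ p t := hjun p hp
            have hpl : Letter φ ψ p := hL'.1 p (List.mem_of_mem_getLast? hp)
            obtain ⟨s, hps⟩ := letter_fac hpl
            have hts : t ∈ fac φ ψ !s := R_next hRpt hps
            have hse : e = !s := fac_determined hinj htl.2 hts hte
            exact R_of_fac hinj hpl.2 hps (hse ▸ hvf)
        · rw [hv]
          simp [mul_assoc]
    · have hue' : u ∈ fac φ ψ !e := by
        have huC : u ∉ amalgC φ ψ := fun h => hue (amalgC_le_fac e h)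
        obtain ⟨s, hus⟩ : ∃ s, u ∈ fac φ ψ s := ⟨i, hu⟩
        have : ¬ s = e := fun h => hue (h ▸ hus)
        have hse : s = !e := by cases s <;> cases e <;> simp_all
        exact hse ▸ hus
      have huC : u ∉ amalgC φ ψ := fun h => hue (amalgC_le_fac e h)
      refine ⟨c, (L' ++ [t]) ++ [u], hc, ?_, by simp [mul_assoc]⟩
      constructor
      · intro z hz
        rcases List.mem_append.mp hz with hz | hz
        · exact hLt.1 z hz
        · rw [List.mem_singleton] at hz
          subst hz
          exact letter_of_fac hue' huC
      · refine List.isChain_append.mpr ⟨hLt.2, by simp, ?_⟩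
        intro p hp q hq
        simp only [List.head?_cons, Option.mem_def, Option.some.injEq] at hq
        subst hq
        rw [List.getLast?_concat] at hp
        simp only [Option.mem_def, Option.some.injEq] at hp
        subst hp
        exact R_of_fac hinj htl.2 hte hue'

theorem exists_red_form (x : Amalg φ ψ) :
    ∃ c L, c ∈ amalgC φ ψ ∧ Red φ ψ L ∧ x = c * L.prod := by
  induction x using Monoid.PushoutI.induction_on with
  | of i g => exact single_form ⟨g, rfl⟩
  | base h => exact ⟨Monoid.PushoutI.base (amalgHom φ ψ) h, [], ⟨h, rfl⟩, red_nil, by simp⟩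
  | mul x y hx hy =>
    obtain ⟨c₁, L₁, hc₁, hL₁, rfl⟩ := hx
    obtain ⟨c₂, L₂, hc₂, hL₂, rfl⟩ := hy
    have hfold : ∀ (M : List (Amalg φ ψ)), (∀ m ∈ M, Letter φ ψ m) →
        ∀ z : Amalg φ ψ, (∃ c L, c ∈ amalgC φ ψ ∧ Red φ ψ L ∧ z = c * L.prod) →
        ∃ c L, c ∈ amalgC φ ψ ∧ Red φ ψ L ∧ z * M.prod = c * L.prod := by
      intro M
      induction M with
      | nil => intro _ z hz; simpa using hz
      | cons m M' ihM =>
        intro hlet z hz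
        obtain ⟨c, L, hc, hL, rfl⟩ := hz
        obtain ⟨bm, hbm⟩ := letter_fac (hlet m (List.mem_cons_self))
        obtain ⟨c', L', hc', hL', heq⟩ := mul_right_closed hinj L hL c hc bm m hbm
        have := ihM (fun z hz => hlet z (List.mem_cons_of_mem _ hz)) (c' * L'.prod)
          ⟨c', L', hc', hL', rfl⟩
        obtain ⟨c'', L'', hc'', hL'', heq2⟩ := this
        exact ⟨c'', L'', hc'', hL'', by rw [List.prod_cons, ← mul_assoc, heq, heq2]⟩
    obtain ⟨c', L', hc', hL', heq⟩ := mul_right_closed hinj L₁ hL₁ c₁ hc₁ true c₂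
      (amalgC_le_fac true hc₂)
    obtain ⟨c'', L'', hc'', hL'', heq2⟩ := hfold L₂ hL₂.1 (c' * L'.prod) ⟨c', L', hc', hL', rfl⟩
    exact ⟨c'', L'', hc'', hL'', by rw [← heq2, ← heq]; group⟩

end ConjAux
namespace ConjAux

open Monoid Monoid.PushoutI List

variable {A B C : Type u} [Group A] [Group B] [Group C] {φ : C →* A} {ψ : C →* B}

variable (hinj : ∀ i, Function.Injective (amalgHom φ ψ i))

include hinj

theorem master {b : Bool} {g g' : Amalg φ ψ} (hg : g ∈ fac φ ψ b)
    (hno : ∀ x : Amalg φ ψ, x⁻¹ * g * x ∉ amalgC φ ψ)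
    (hcr : CyclicallyReduced φ ψ g') (x : Amalg φ ψ) (hx : x⁻¹ * g * x = g') :
    g' ∈ fac φ ψ b ∧ g' ∉ amalgC φ ψ ∧ ∃ a ∈ fac φ ψ b, a⁻¹ * g * a = g' := by
  obtain ⟨cx, Lx, hcx, hLx, hxeq⟩ := exists_red_form hinj x
  have hg₀ : cx⁻¹ * g * cx ∈ fac φ ψ b :=
    mul_mem (mul_mem (inv_mem (amalgC_le_fac b hcx)) hg) (amalgC_le_fac b hcx)
  have hno₀ : ∀ z, z⁻¹ * (cx⁻¹ * g * cx) * z ∉ amalgC φ ψ := fun z => by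
    have := hno (cx * z)
    simpa [mul_assoc, mul_inv_rev] using this
  obtain ⟨a₀, ha₀, M, hM, hMhead, heq⟩ := conj_decomp Lx hLx b (cx⁻¹ * g * cx) hg₀ hno₀
  have hg' : g' = M.prod⁻¹ * ((cx * a₀)⁻¹ * g * (cx * a₀)) * M.prod := by
    rw [← hx, hxeq]
    calc (cx * Lx.prod)⁻¹ * g * (cx * Lx.prod)
        = Lx.prod⁻¹ * (cx⁻¹ * g * cx) * Lx.prod := by group
      _ = M.prod⁻¹ * (a₀⁻¹ * (cx⁻¹ * g * cx) * a₀) * M.prod := heq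
      _ = M.prod⁻¹ * ((cx * a₀)⁻¹ * g * (cx * a₀)) * M.prod := by group
  have haf : cx * a₀ ∈ fac φ ψ b := mul_mem (amalgC_le_fac b hcx) ha₀
  have hhf : (cx * a₀)⁻¹ * g * (cx * a₀) ∈ fac φ ψ b := mul_mem (mul_mem (inv_mem haf) hg) haf
  have hhC : (cx * a₀)⁻¹ * g * (cx * a₀) ∉ amalgC φ ψ := hno (cx * a₀)
  cases M with
  | nil =>
    have hg'2 : g' = (cx * a₀)⁻¹ * g * (cx * a₀) := by simpa using hg'
    exact ⟨hg'2 ▸ hhf, hg'2 ▸ hhC, cx * a₀, haf, hg'2.symm⟩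
  | cons m M' =>
    exfalso
    obtain ⟨c, L, hgL, hform, hdisj⟩ := hcr
    have hLred : Red φ ψ L := (reducedForm_iff.mp hform).2
    have hcC : c ∈ amalgC φ ψ := (reducedForm_iff.mp hform).1
    have hmhead : m ∈ fac φ ψ !b ∧ m ∉ fac φ ψ b := hMhead m rfl
    set W : List (Amalg φ ψ) :=
      ((m :: M').map (·⁻¹)).reverse ++ ((cx * a₀)⁻¹ * g * (cx * a₀)) :: m :: M' with hW
    have hWred : Red φ ψ W := by
      constructor
      · intro z hz
        rcases List.mem_append.mp hz with hz | hz
        · exact (red_revinv hinj hM).1 z hz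
        · rcases List.mem_cons.mp hz with rfl | hz
          · exact letter_of_fac hhf hhC
          · exact hM.1 z hz
      · refine List.isChain_append.mpr ⟨(red_revinv hinj hM).2, ?_, ?_⟩
        · refine List.isChain_cons.mpr ⟨?_, hM.2⟩
          intro q hq
          simp only [List.head?_cons, Option.mem_def, Option.some.injEq] at hq
          subst hq
          exact R_of_fac hinj hhC hhf hmhead.1
        · intro p hp q hq
          simp only [List.head?_cons, Option.mem_def, Option.some.injEq] at hq
          subst hq
          rw [List.getLast?_reverse] at hp
          simp only [List.map_cons, List.head?_cons, Option.mem_def, Option.some.injEq] at hp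
          subst hp
          have hml : Letter φ ψ m := hM.1 m (List.mem_cons_self)
          have hfb : (cx * a₀)⁻¹ * g * (cx * a₀) ∈ fac φ ψ !(!b) := by
            rw [Bool.not_not]; exact hhf
          exact R_of_fac hinj (letter_inv hml).2 (inv_mem hmhead.1) hfb
    have hWprod : W.prod = g' := by
      rw [hW, List.prod_append, prod_revinv, hg']
      simp only [List.prod_cons]
      group
    obtain ⟨hlen, hhead, hlast⟩ :=
      shape_unique hinj W (c₁ := 1) (c₂ := c) (one_mem _) hcC hWred hLred
        (by rw [one_mul, hWprod, hgL])
    have hLlen : 3 ≤ L.length := by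
      rw [← hlen, hW]
      simp
      omega
    rcases hdisj with h0 | ⟨h1, _⟩ | ⟨_, hcyc⟩
    · omega
    · omega
    · have hNne : (m :: M') ≠ [] := List.cons_ne_nil _ _
      have hLne : L ≠ [] := by
        intro h; rw [h] at hLlen; simp at hLlen
      have hWlast : W.getLast? = some ((m :: M').getLast hNne) := by
        rw [hW, List.getLast?_append_of_ne_nil _ (List.cons_ne_nil _ _),
          List.getLast?_cons_cons, List.getLast?_eq_getLast hNne]
      have hWhead : W.head? = some (((m :: M').getLast hNne)⁻¹) := by
        rw [hW, List.head?_append_of_ne_nil _ (by simp), List.head?_reverse,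
          List.getLast?_map, List.getLast?_eq_getLast hNne]
        rfl
      have hlstl : Letter φ ψ ((m :: M').getLast hNne) := hM.1 _ (List.getLast_mem hNne)
      obtain ⟨t, hlt⟩ := letter_fac hlstl
      have hxL : L.head hLne ∈ fac φ ψ t :=
        (hhead t _ _ (by rw [hWhead]; rfl) (by rw [List.head?_eq_head hLne]; rfl)).mp
          (inv_mem hlt)
      have hyL : L.getLast hLne ∈ fac φ ψ t :=
        (hlast t _ _ (by rw [hWlast]; rfl) (by rw [List.getLast?_eq_getLast hLne]; rfl)).mp hlt
      have hyll : Letter φ ψ (L.getLast hLne) := hLred.1 _ (List.getLast_mem hLne)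
      have hcyc2 := hcyc (L.head hLne) (L.getLast hLne)
        (by rw [List.head?_eq_head hLne]; rfl) (by rw [List.getLast?_eq_getLast hLne]; rfl)
      cases t
      · exact hyll.2 (mem_amalgC_of_mem_both hinj hyL (hcyc2.2 hxL))
      · exact hyll.2 (mem_amalgC_of_mem_both hinj hyL (hcyc2.1 hxL))

end ConjAux

/-- Conjugacy criterion, length 1 case: if `g ∈ (A ∪ B) ∖ C` has no conjugate in `C`,
then any cyclically reduced conjugate `g'` of `g` lies in the same factor as `g`
(and outside `C`), and `g` and `g'` are conjugate by an element of that factor. -/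
theorem conj_length_one
    (hφ : Function.Injective φ) (hψ : Function.Injective ψ)
    (g g' : Amalg φ ψ)
    (hgf : g ∈ facA φ ψ ∨ g ∈ facB φ ψ) (hgC : g ∉ amalgC φ ψ)
    (hnoconj : ∀ x : Amalg φ ψ, x⁻¹ * g * x ∉ amalgC φ ψ)
    (hcr : CyclicallyReduced φ ψ g')
    (hconj : ∃ x : Amalg φ ψ, x⁻¹ * g * x = g') :
    (g ∈ facA φ ψ → g' ∈ facA φ ψ ∧ g' ∉ amalgC φ ψ ∧
      ∃ a ∈ facA φ ψ, a⁻¹ * g * a = g') ∧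
    (g ∈ facB φ ψ → g' ∈ facB φ ψ ∧ g' ∉ amalgC φ ψ ∧
      ∃ b ∈ facB φ ψ, b⁻¹ * g * b = g') := by
  have hinj : ∀ i, Function.Injective (amalgHom φ ψ i) := by
    intro i
    cases i
    · exact hψ
    · exact hφ
  obtain ⟨x, hx⟩ := hconj
  constructor
  · intro hgA
    exact ConjAux.master hinj (b := true) hgA hnoconj hcr x hx
  · intro hgB
    exact ConjAux.master hinj (b := false) hgB hnoconj hcr x hx
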